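/- Let G and H be finite abelian groups (written additively) and let f : G → H be any function. Then f is differentially 1-uniform if and only if the number of quadruples (w,x,y,z) ∈ G⁴ satisfying both w + x = y + z and f(w) + f(x) = f(y) + f(z) is exactly |G|(2|G| − 1). -/

import Mathlib

/-- A function `f : G → H` between additive groups is differentially 1-uniform if for
every `(a, b) ≠ (0, 0)` the equation `f (x + a) - f x = b` has at most one solution. -/
def DiffOneUniform {G H : Type*} [AddGroup G] [AddGroup H] (f : G → H) : Prop :=
  ∀ a : G, ∀ b : H, ¬(a = 0 ∧ b = 0) →
    ∀ x y : G, f (x + a) - f x = b → f (y + a) - f y = b → x = y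

section Aux

variable {G H : Type*} [AddCommGroup G] [Fintype G] [DecidableEq G]
    [AddCommGroup H] [DecidableEq H]

/-- The set of collision pairs of `g`. -/
private def pairSet (g : G → H) : Finset (G × G) :=
  Finset.univ.filter (fun p => g p.1 = g p.2)

private lemma diag_subset_pairSet (g : G → H) :
    (Finset.univ.image (fun x : G => (x, x))) ⊆ pairSet g := by
  intro p hp
  simp only [Finset.mem_image] at hp
  obtain ⟨x, _, rfl⟩ := hp
  simp [pairSet]

private lemma diag_card : (Finset.univ.image (fun x : G => (x, x))).card = Fintype.card G := by
  rw [Finset.card_image_of_injective _ (fun a b h => congrArg Prod.fst h)]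
  simp

private lemma pairSet_card_ge (g : G → H) : Fintype.card G ≤ (pairSet g).card := by
  rw [← diag_card]
  exact Finset.card_le_card (diag_subset_pairSet g)

private lemma pairSet_card_eq_iff (g : G → H) :
    (pairSet g).card = Fintype.card G ↔ Function.Injective g := by
  constructor
  · intro h a b hab
    have hsub := diag_subset_pairSet g
    have heq : pairSet g = Finset.univ.image (fun x : G => (x, x)) :=
      (Finset.eq_of_subset_of_card_le hsub (by rw [diag_card, h])).symm
    have hmem : (a, b) ∈ pairSet g := by simp [pairSet, hab]
    rw [heq] at hmem
    simp only [Finset.mem_image] at hmem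
    obtain ⟨x, _, hx⟩ := hmem
    have h1 : x = a := congrArg Prod.fst hx
    have h2 : x = b := congrArg Prod.snd hx
    rw [← h1, h2]
  · intro hinj
    have hsub : pairSet g ⊆ Finset.univ.image (fun x : G => (x, x)) := by
      intro p hp
      simp only [pairSet, Finset.mem_filter] at hp
      have := hinj hp.2
      simp only [Finset.mem_image]
      exact ⟨p.1, Finset.mem_univ _, by rw [Prod.ext_iff]; exact ⟨rfl, this⟩⟩
    rw [Finset.Subset.antisymm hsub (diag_subset_pairSet g), diag_card]

private lemma diffOneUniform_iff_inj (f : G → H) :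
    DiffOneUniform f ↔
      ∀ d : G, d ≠ 0 → Function.Injective (fun x => f (x + d) - f x) := by
  constructor
  · intro h d hd x y hxy
    exact h d (f (x + d) - f x) (fun hc => hd hc.1) x y rfl hxy.symm
  · intro h a b hab x y hx hy
    by_cases ha : a = 0
    · exact absurd ⟨ha, by rw [← hx, ha, add_zero, sub_self]⟩ hab
    · exact h a ha (hx.trans hy.symm)

end Aux

/-- `f : G → H` is differentially 1-uniform iff the number of quadruples `(w, x, y, z)`
with `w + x = y + z` and `f w + f x = f y + f z` is exactly `|G| (2|G| - 1)`. -/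
theorem diffOneUniform_iff_card_quadruples {G H : Type*}
    [AddCommGroup G] [Fintype G] [DecidableEq G]
    [AddCommGroup H] [DecidableEq H] (f : G → H) :
    DiffOneUniform f ↔
      (Finset.univ.filter (fun q : G × G × G × G =>
          q.1 + q.2.1 = q.2.2.1 + q.2.2.2 ∧
          f q.1 + f q.2.1 = f q.2.2.1 + f q.2.2.2)).card =
        Fintype.card G * (2 * Fintype.card G - 1) := by
  classical
  set n := Fintype.card G with hn
  have hn1 : 1 ≤ n := Fintype.card_pos
  set S : Finset (G × G × G) := Finset.univ.filter
    (fun t : G × G × G => f (t.2.1 + t.1) - f t.2.1 = f (t.2.2 + t.1) - f t.2.2) with hS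
  -- bijection between quadruples and triples
  have hbij : (Finset.univ.filter (fun q : G × G × G × G =>
          q.1 + q.2.1 = q.2.2.1 + q.2.2.2 ∧
          f q.1 + f q.2.1 = f q.2.2.1 + f q.2.2.2)).card = S.card := by
    apply Finset.card_nbij' (fun q => (q.1 - q.2.2.1, q.2.1, q.2.2.1))
      (fun t => (t.2.2 + t.1, t.2.1, t.2.2, t.2.1 + t.1))
    · intro q hq
      simp only [Finset.mem_coe, Finset.mem_filter, Finset.mem_univ, true_and] at hq
      obtain ⟨h1, h2⟩ := hq
      simp only [Finset.mem_coe, hS, Finset.mem_filter, Finset.mem_univ, true_and]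
      have hz : q.2.1 + (q.1 - q.2.2.1) = q.2.2.2 := by
        have : q.2.1 + (q.1 - q.2.2.1) = q.1 + q.2.1 - q.2.2.1 := by abel
        rw [this, h1, add_sub_cancel_left]
      have hw : q.2.2.1 + (q.1 - q.2.2.1) = q.1 := add_sub_cancel _ _
      rw [hz, hw, sub_eq_sub_iff_add_eq_add]
      calc f q.2.2.2 + f q.2.2.1 = f q.2.2.1 + f q.2.2.2 := add_comm _ _
        _ = f q.1 + f q.2.1 := h2.symm
    · intro t ht
      simp only [Finset.mem_coe, hS, Finset.mem_filter, Finset.mem_univ, true_and] at ht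
      simp only [Finset.mem_coe, Finset.mem_filter, Finset.mem_univ, true_and]
      constructor
      · abel
      · rw [sub_eq_sub_iff_add_eq_add] at ht
        exact ht.symm.trans (add_comm _ _)
    · intro q hq
      simp only [Finset.mem_coe, Finset.mem_filter, Finset.mem_univ, true_and] at hq
      obtain ⟨h1, h2⟩ := hq
      have hz : q.2.1 + (q.1 - q.2.2.1) = q.2.2.2 := by
        have : q.2.1 + (q.1 - q.2.2.1) = q.1 + q.2.1 - q.2.2.1 := by abel
        rw [this, h1, add_sub_cancel_left]
      ext <;> simp [hz, add_sub_cancel]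
    · intro t _
      ext <;> simp [add_sub_cancel_right]
  -- regroup the triple count by the difference d
  have hsum : S.card = ∑ d : G, (pairSet (fun x => f (x + d) - f x)).card := by
    rw [hS, Finset.card_filter, Fintype.sum_prod_type]
    exact Finset.sum_congr rfl fun d _ => by rw [pairSet, Finset.card_filter]
  -- the d = 0 term
  have h0 : (pairSet (fun x : G => f (x + 0) - f x)).card = n * n := by
    have huniv : (pairSet (fun x : G => f (x + 0) - f x)) = Finset.univ :=
      Finset.eq_univ_of_forall fun p => by simp [pairSet]
    rw [huniv, Finset.card_univ, Fintype.card_prod]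
  -- arithmetic on the RHS
  have hrhs : n * (2 * n - 1) = n * n + (n - 1) * n := by
    have key : ∀ k : ℕ, 1 ≤ k → k * (2 * k - 1) = k * k + (k - 1) * k := by
      intro k hk
      obtain ⟨m, rfl⟩ : ∃ m, k = m + 1 := ⟨k - 1, by omega⟩
      have e1 : 2 * (m + 1) - 1 = 2 * m + 1 := by omega
      have e2 : m + 1 - 1 = m := by omega
      rw [e1, e2]; ring
    exact key n hn1
  rw [diffOneUniform_iff_inj, hbij, hsum,
    ← Finset.add_sum_erase _ _ (Finset.mem_univ (0 : G)), h0, hrhs, add_right_inj]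
  have hconst : (n - 1) * n = ∑ _d ∈ (Finset.univ : Finset G).erase 0, n := by
    rw [Finset.sum_const, Finset.card_erase_of_mem (Finset.mem_univ 0), Finset.card_univ,
      smul_eq_mul]
  rw [hconst, eq_comm,
    Finset.sum_eq_sum_iff_of_le (fun d _ => pairSet_card_ge (fun x => f (x + d) - f x))]
  constructor
  · intro h d hd
    exact ((pairSet_card_eq_iff _).mpr
      (h d (Finset.mem_erase.mp hd).1)).symm
  · intro h d hd
    exact (pairSet_card_eq_iff _).mp
      (h d (Finset.mem_erase.mpr ⟨hd, Finset.mem_univ d⟩)).symm
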